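/- For real parameters φ, v, k with k > 0, the pulse A(x,t) = e^{iφ} (k / cosh(k(x - vt)))^{1/2} · exp(i(vx/2 + (k² - v²)t/4)) is a solution of the quintic nonlinear Schrödinger equation i A_t + A_{xx} + (3/4)|A|⁴A = 0. -/

import Mathlib

open Complex Real

private lemma coshRpow (p y : ℝ) : HasDerivAt (fun z => Real.cosh z ^ p)
    (p * Real.cosh y ^ (p - 1) * Real.sinh y) y := by
  exact (Real.hasDerivAt_rpow_const (x := Real.cosh y) (p := p)
    (Or.inl (Real.cosh_pos y).ne')).comp y (Real.hasDerivAt_cosh y)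

private lemma hP (y : ℝ) : HasDerivAt (fun z => Real.cosh z ^ (-(1/2) : ℝ))
    (-(1/2) * Real.cosh y ^ (-(3/2) : ℝ) * Real.sinh y) y := by
  rw [show (-(3/2):ℝ) = -(1/2) - 1 by norm_num]; exact coshRpow _ y

private lemma hP' (y : ℝ) : HasDerivAt (fun z => -(1/2) * (Real.cosh z ^ (-(3/2) : ℝ) * Real.sinh z))
    (1/4 * Real.cosh y ^ (-(1/2) : ℝ) - 3/4 * Real.cosh y ^ (-(5/2) : ℝ)) y := by
  have h1 : HasDerivAt (fun z => Real.cosh z ^ (-(3/2):ℝ))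
      (-(3/2) * Real.cosh y ^ (-(5/2) : ℝ) * Real.sinh y) y := by
    rw [show (-(5/2):ℝ) = -(3/2) - 1 by norm_num]; exact coshRpow _ y
  have h2 := (h1.mul (Real.hasDerivAt_sinh y)).const_mul (-(1/2):ℝ)
  convert h2 using 1
  · rfl
  · rfl
  · rfl
  have e1 : Real.cosh y ^ (-(5/2):ℝ) * Real.cosh y ^ 2 = Real.cosh y ^ (-(1/2):ℝ) := by
    rw [← Real.rpow_natCast (Real.cosh y) 2, ← Real.rpow_add (Real.cosh_pos y)]; norm_num
  have e2 : Real.cosh y ^ (-(1/2):ℝ) = Real.cosh y ^ (-(3/2):ℝ) * Real.cosh y := by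
    have := (Real.rpow_add (Real.cosh_pos y) (-(3/2)) 1)
    rw [Real.rpow_one] at this
    norm_num at this
    exact this
  have e3 := Real.sinh_sq (x := y)
  linear_combination (-(3/4) * Real.cosh y ^ (-(5/2):ℝ)) * e3 + (-(3/4)) * e1 + (-(1/2)) * e2

private lemma aux_key (c : ℂ) (a : ℝ) (f θ : ℝ → ℝ) (f' d x : ℝ)
    (hf : HasDerivAt f f' x) (hθ : HasDerivAt θ d x) :
    HasDerivAt (fun s => c * (((a * f s : ℝ) : ℂ) * Complex.exp (Complex.I * ((θ s : ℝ) : ℂ))))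
      (c * (((a * f' : ℝ) : ℂ) * Complex.exp (Complex.I * ((θ x : ℝ) : ℂ))
        + ((a * f x : ℝ) : ℂ) * (Complex.exp (Complex.I * ((θ x : ℝ) : ℂ)) * (Complex.I * (d : ℂ))))) x := by
  have h1 : HasDerivAt (fun s => ((a * f s : ℝ) : ℂ)) ((a * f' : ℝ) : ℂ) x :=
    (hf.const_mul a).ofReal_comp
  have h2 : HasDerivAt (fun s => Complex.exp (Complex.I * ((θ s : ℝ):ℂ)))
      (Complex.exp (Complex.I * ((θ x : ℝ):ℂ)) * (Complex.I * (d:ℂ))) x :=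
    (hθ.ofReal_comp.const_mul Complex.I).cexp
  exact (h1.mul h2).const_mul c

theorem stmt_6 (φ v k : ℝ) (hk : 0 < k) (A : ℝ → ℝ → ℂ)
    (hA : ∀ x t, A x t =
      Complex.exp (Complex.I * (φ : ℂ)) *
        ((Real.sqrt (k / Real.cosh (k * (x - v * t))) : ℝ) : ℂ) *
        Complex.exp (Complex.I *
          ((v * x / 2 + (k ^ 2 - v ^ 2) * t / 4 : ℝ) : ℂ))) :
    ∀ x t,
      Complex.I * deriv (fun s => A x s) t +
        deriv (fun y => deriv (fun y' => A y' t) y) x +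
        (3 / 4) * (‖A x t‖) ^ 4 * A x t = 0 := by
  intro x t
  have hA' : ∀ y s, A y s = Complex.exp (Complex.I * (φ : ℂ)) *
      (((Real.sqrt k * Real.cosh (k * (y - v * s)) ^ (-(1/2):ℝ) : ℝ) : ℂ) *
        Complex.exp (Complex.I * ((v * y / 2 + (k ^ 2 - v ^ 2) * s / 4 : ℝ) : ℂ))) := by
    intro y s
    rw [hA]
    rw [show Real.sqrt (k / Real.cosh (k * (y - v * s)))
        = Real.sqrt k * Real.cosh (k * (y - v * s)) ^ (-(1/2):ℝ) by
      rw [Real.sqrt_div hk.le, Real.sqrt_eq_rpow (Real.cosh (k * (y - v * s))),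
        Real.rpow_neg (Real.cosh_pos _).le, div_eq_mul_inv]]
    ring
  -- time derivative
  have hθt : HasDerivAt (fun s : ℝ => v * x / 2 + (k ^ 2 - v ^ 2) * s / 4) ((k^2 - v^2)/4) t := by
    simpa using (((hasDerivAt_id t).const_mul (k^2 - v^2)).div_const 4).const_add (v * x / 2)
  have hin_t : HasDerivAt (fun s : ℝ => k * (x - v * s)) (-(k * v)) t := by
    simpa using ((hasDerivAt_const t x).sub ((hasDerivAt_id t).const_mul v)).const_mul k
  have hft : HasDerivAt (fun s => Real.cosh (k * (x - v * s)) ^ (-(1/2):ℝ))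
      ((-(1/2) * Real.cosh (k * (x - v * t)) ^ (-(3/2):ℝ) * Real.sinh (k * (x - v * t))) * -(k * v)) t :=
    (hP _).comp t hin_t
  have hDt : deriv (fun s => A x s) t = Complex.exp (Complex.I * (φ : ℂ)) *
      (((Real.sqrt k * ((-(1/2) * Real.cosh (k * (x - v * t)) ^ (-(3/2):ℝ) * Real.sinh (k * (x - v * t))) * -(k * v)) : ℝ) : ℂ) *
          Complex.exp (Complex.I * ((v * x / 2 + (k ^ 2 - v ^ 2) * t / 4 : ℝ) : ℂ))
        + ((Real.sqrt k * Real.cosh (k * (x - v * t)) ^ (-(1/2):ℝ) : ℝ) : ℂ) *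
          (Complex.exp (Complex.I * ((v * x / 2 + (k ^ 2 - v ^ 2) * t / 4 : ℝ) : ℂ)) *
            (Complex.I * (((k^2 - v^2)/4 : ℝ) : ℂ)))) := by
    rw [show (fun s => A x s) = (fun s => Complex.exp (Complex.I * (φ : ℂ)) *
      (((Real.sqrt k * Real.cosh (k * (x - v * s)) ^ (-(1/2):ℝ) : ℝ) : ℂ) *
        Complex.exp (Complex.I * ((v * x / 2 + (k ^ 2 - v ^ 2) * s / 4 : ℝ) : ℂ))))
      from funext fun s => hA' x s]
    exact (aux_key _ _ _ _ _ _ t hft hθt).deriv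
  -- first space derivative (as a function of y)
  have hθx : ∀ y : ℝ, HasDerivAt (fun y' : ℝ => v * y' / 2 + (k ^ 2 - v ^ 2) * t / 4) (v/2) y := by
    intro y
    simpa using (((hasDerivAt_id y).const_mul v).div_const 2).add_const ((k ^ 2 - v ^ 2) * t / 4)
  have hin_x : ∀ y : ℝ, HasDerivAt (fun y' : ℝ => k * (y' - v * t)) k y := by
    intro y
    simpa using ((hasDerivAt_id y).sub_const (v * t)).const_mul k
  have hfx : ∀ y : ℝ, HasDerivAt (fun y' => Real.cosh (k * (y' - v * t)) ^ (-(1/2):ℝ))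
      ((-(1/2) * Real.cosh (k * (y - v * t)) ^ (-(3/2):ℝ) * Real.sinh (k * (y - v * t))) * k) y :=
    fun y => (hP _).comp y (hin_x y)
  have hD1fun : (fun y => deriv (fun y' => A y' t) y) = (fun y =>
      Complex.exp (Complex.I * (φ : ℂ)) *
        (((Real.sqrt k * (-(1/2) * (Real.cosh (k * (y - v * t)) ^ (-(3/2):ℝ) * Real.sinh (k * (y - v * t))) * k) : ℝ) : ℂ) *
          Complex.exp (Complex.I * ((v * y / 2 + (k ^ 2 - v ^ 2) * t / 4 : ℝ) : ℂ)))
      + (Complex.exp (Complex.I * (φ : ℂ)) * (Complex.I * ((v : ℂ)/2))) *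
        (((Real.sqrt k * Real.cosh (k * (y - v * t)) ^ (-(1/2):ℝ) : ℝ) : ℂ) *
          Complex.exp (Complex.I * ((v * y / 2 + (k ^ 2 - v ^ 2) * t / 4 : ℝ) : ℂ)))) := by
    funext y
    rw [show (fun y' => A y' t) = (fun y' => Complex.exp (Complex.I * (φ : ℂ)) *
      (((Real.sqrt k * Real.cosh (k * (y' - v * t)) ^ (-(1/2):ℝ) : ℝ) : ℂ) *
        Complex.exp (Complex.I * ((v * y' / 2 + (k ^ 2 - v ^ 2) * t / 4 : ℝ) : ℂ))))
      from funext fun y' => hA' y' t]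
    rw [(aux_key _ _ _ _ _ _ y (hfx y) (hθx y)).deriv]
    push_cast
    ring
  -- second space derivative
  have hf1 : HasDerivAt (fun y => -(1/2) * (Real.cosh (k * (y - v * t)) ^ (-(3/2):ℝ) * Real.sinh (k * (y - v * t))) * k)
      (((1/4 * Real.cosh (k * (x - v * t)) ^ (-(1/2):ℝ) - 3/4 * Real.cosh (k * (x - v * t)) ^ (-(5/2):ℝ)) * k) * k) x :=
    by have h := (hP' (k * (x - v * t))).comp x (hin_x x); exact h.mul_const k
  have h1x := aux_key (Complex.exp (Complex.I * (φ : ℂ))) (Real.sqrt k)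
    (fun y => -(1/2) * (Real.cosh (k * (y - v * t)) ^ (-(3/2):ℝ) * Real.sinh (k * (y - v * t))) * k)
    (fun y' : ℝ => v * y' / 2 + (k ^ 2 - v ^ 2) * t / 4) _ _ x hf1 (hθx x)
  have h2x := aux_key (Complex.exp (Complex.I * (φ : ℂ)) * (Complex.I * ((v : ℂ)/2))) (Real.sqrt k)
    (fun y => Real.cosh (k * (y - v * t)) ^ (-(1/2):ℝ))
    (fun y' : ℝ => v * y' / 2 + (k ^ 2 - v ^ 2) * t / 4) _ _ x (hfx x) (hθx x)
  have hDxx := (h1x.add h2x).deriv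
  simp only [Pi.add_def] at hDxx
  rw [← hD1fun] at hDxx
  -- absolute value
  have habs : ‖A x t‖ = Real.sqrt k * Real.cosh (k * (x - v * t)) ^ (-(1/2):ℝ) := by
    have hre : ∀ r : ℝ, (Complex.I * (r:ℂ)).re = 0 := fun r => by
      simp [Complex.mul_re]
    rw [hA' x t, norm_mul, norm_mul, Complex.norm_exp, Complex.norm_exp, Complex.norm_real, Real.norm_eq_abs,
      hre φ, hre (v * x / 2 + (k ^ 2 - v ^ 2) * t / 4),
      Real.exp_zero, one_mul, mul_one,
      _root_.abs_of_nonneg (mul_nonneg (Real.sqrt_nonneg k) (Real.rpow_nonneg (Real.cosh_pos _).le _))]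
  -- assemble
  rw [hDt, hDxx, habs, hA' x t]
  have hI : Complex.I * Complex.I = -1 := Complex.I_mul_I
  have c2 : ((Real.sqrt k : ℝ) : ℂ) ^ 2 = (k : ℂ) := by
    norm_cast; exact Real.sq_sqrt hk.le
  have c5 : ((Real.cosh (k * (x - v * t)) ^ (-(1/2):ℝ) : ℝ) : ℂ) ^ 5
      = ((Real.cosh (k * (x - v * t)) ^ (-(5/2):ℝ) : ℝ) : ℂ) := by
    norm_cast
    rw [← Real.rpow_natCast (Real.cosh (k * (x - v * t)) ^ (-(1/2):ℝ)) 5,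
      ← Real.rpow_mul (Real.cosh_pos _).le]
    norm_num
  set E : ℂ := Complex.exp (Complex.I * ((v * x / 2 + (k ^ 2 - v ^ 2) * t / 4 : ℝ) : ℂ)) with hE
  set c : ℂ := Complex.exp (Complex.I * (φ : ℂ)) with hc
  set P : ℝ := Real.cosh (k * (x - v * t)) ^ (-(1/2):ℝ) with hPdef
  set Q : ℝ := Real.cosh (k * (x - v * t)) ^ (-(3/2):ℝ) with hQdef
  set R : ℝ := Real.cosh (k * (x - v * t)) ^ (-(5/2):ℝ) with hRdef
  set S : ℝ := Real.sinh (k * (x - v * t)) with hSdef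
  have hS : ((S : ℝ) : ℂ) = Complex.sinh ((k:ℂ) * ((x:ℂ) - (v:ℂ)*(t:ℂ))) := by
    rw [hSdef]; push_cast; ring
  push_cast
  linear_combination (c * E * (Real.sqrt k : ℂ) * (P : ℂ) * ((k:ℂ)^2/4)) * hI
    + (3/4) * c * E * ((Real.sqrt k : ℂ))^5 * c5
    + (3/4) * c * E * (R : ℂ) * (Real.sqrt k : ℂ) * (((Real.sqrt k : ℂ))^2 + (k:ℂ)) * c2
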